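/- Let r : ℝ → ℝ be twice continuously differentiable with 0 < r(t) < 1 for all t ∈ ℝ, let F(s,t) = (√(1 − r(t)²) cos s, √(1 − r(t)²) sin s, r(t) cos t, r(t) sin t) ∈ ℝ⁴, and let ν(s,t) = [ r(t)²√(1 − r(t)²)·(cos s, sin s, 0, 0) − r(t)(1 − r(t)²)·(0, 0, cos t, sin t) − r'(t)·(0, 0, sin t, −cos t) ] / √(r'(t)² + r(t)²(1 − r(t)²)). Then the identity ⟨∂ν/∂s, ∂F/∂s⟩/⟨∂F/∂s, ∂F/∂s⟩ + ⟨∂ν/∂t, ∂F/∂t⟩/⟨∂F/∂t, ∂F/∂t⟩ = 0 holds for all (s,t) ∈ ℝ² if and only if r satisfies (1 − r(t)²)·r(t)·r''(t) = (1 − 2 r(t)²)·(2 r'(t)² + r(t)²(1 − r(t)²)) for all t ∈ ℝ. -/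

import Mathlib

open scoped RealInnerProductSpace

noncomputable def e4 (x : Fin 4 → ℝ) : EuclideanSpace ℝ (Fin 4) :=
  (WithLp.equiv 2 (Fin 4 → ℝ)).symm x

lemma inner_e4' (a b c d a' b' c' d' : ℝ) :
    ⟪e4 ![a, b, c, d], e4 ![a', b', c', d']⟫
      = a * a' + b * b' + c * c' + d * d' := by
  simp [e4, PiLp.inner_apply, Fin.sum_univ_four, mul_comm]

lemma hasDerivAt_e4 {a b c d : ℝ → ℝ} {a' b' c' d' : ℝ} {x : ℝ}
    (ha : HasDerivAt a a' x) (hb : HasDerivAt b b' x)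
    (hc : HasDerivAt c c' x) (hd : HasDerivAt d d' x) :
    HasDerivAt (fun y => e4 ![a y, b y, c y, d y]) (e4 ![a', b', c', d']) x := by
  have h : HasDerivAt (fun y => (![a y, b y, c y, d y] : Fin 4 → ℝ))
      (![a', b', c', d']) x := by
    rw [hasDerivAt_pi]
    intro i
    fin_cases i <;> simpa
  have := ((PiLp.continuousLinearEquiv 2 ℝ (fun _ : Fin 4 => ℝ)).symm :
      (Fin 4 → ℝ) →L[ℝ] EuclideanSpace ℝ (Fin 4)).hasFDerivAt.comp_hasDerivAt x h
  exact this

lemma nu_core (A B C s t : ℝ) :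
    A • (WithLp.equiv 2 (Fin 4 → ℝ)).symm ![Real.cos s, Real.sin s, 0, 0]
      - B • (WithLp.equiv 2 (Fin 4 → ℝ)).symm ![0, 0, Real.cos t, Real.sin t]
      - C • (WithLp.equiv 2 (Fin 4 → ℝ)).symm ![0, 0, Real.sin t, -Real.cos t]
    = e4 ![A * Real.cos s, A * Real.sin s,
        -(B * Real.cos t) - C * Real.sin t,
        -(B * Real.sin t) + C * Real.cos t] := by
  ext i
  fin_cases i <;> (simp [e4]; try ring)

lemma key_alg (ρ P P2 q W : ℝ) (hq : q ≠ 0) (hW : W ≠ 0)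
    (hq2 : q^2 = 1 - ρ^2) (hW2 : W^2 = P^2 + ρ^2*(1-ρ^2)) :
    W⁻¹*(ρ^2*q^2)/q^2
      + W⁻¹*((2*ρ*P*q + ρ^2*(-(ρ*P)/q))*(-(ρ*P)/q)
          + (-(P*(1-3*ρ^2)) - P)*P + (-(ρ*(1-ρ^2)) + P2)*ρ)
        / ((-(ρ*P)/q)^2 + P^2 + ρ^2)
    = (W⁻¹)^3 * ((1-ρ^2)*ρ*P2 - (1-2*ρ^2)*(2*P^2 + ρ^2*(1-ρ^2))) := by
  have hd : (-(ρ*P)/q)^2 + P^2 + ρ^2 = W^2/q^2 := by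
    field_simp
    linear_combination (ρ^2+P^2)*hq2 - hW2
  have main : W^2*ρ^2 + ((2*ρ*P*q + ρ^2*(-(ρ*P)/q))*(-(ρ*P)/q)
      + (-(P*(1-3*ρ^2)) - P)*P + (-(ρ*(1-ρ^2)) + P2)*ρ) * q^2
      = (1-ρ^2)*ρ*P2 - (1-2*ρ^2)*(2*P^2 + ρ^2*(1-ρ^2)) := by
    field_simp
    linear_combination (ρ^2*P^2 - 2*P^2 - ρ^2 + ρ^4 + ρ*P2)*hq2 + ρ^2*hW2
  rw [hd, ← main]
  field_simp

/-- The rotationally symmetric surface generated by `r` has vanishing mean curvature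
if and only if `r` solves the ODE
`(1 − r²)·r·r'' = (1 − 2r²)·(2r'² + r²(1 − r²))`. -/
theorem mean_curvature_zero_iff_ode
    (r : ℝ → ℝ) (hr : ContDiff ℝ 2 r) (hr01 : ∀ t : ℝ, 0 < r t ∧ r t < 1)
    (F ν : ℝ → ℝ → EuclideanSpace ℝ (Fin 4))
    (hF : ∀ s t : ℝ, F s t = (WithLp.equiv 2 (Fin 4 → ℝ)).symm
      ![Real.sqrt (1 - r t ^ 2) * Real.cos s,
        Real.sqrt (1 - r t ^ 2) * Real.sin s,
        r t * Real.cos t,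
        r t * Real.sin t])
    (hν : ∀ s t : ℝ, ν s t =
      (Real.sqrt ((deriv r t) ^ 2 + r t ^ 2 * (1 - r t ^ 2)))⁻¹ •
        ((r t ^ 2 * Real.sqrt (1 - r t ^ 2)) •
            (WithLp.equiv 2 (Fin 4 → ℝ)).symm ![Real.cos s, Real.sin s, 0, 0]
          - (r t * (1 - r t ^ 2)) •
            (WithLp.equiv 2 (Fin 4 → ℝ)).symm ![0, 0, Real.cos t, Real.sin t]
          - deriv r t •
            (WithLp.equiv 2 (Fin 4 → ℝ)).symm ![0, 0, Real.sin t, -Real.cos t])) :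
    (∀ s t : ℝ,
        ⟪deriv (fun s' => ν s' t) s, deriv (fun s' => F s' t) s⟫
            / ⟪deriv (fun s' => F s' t) s, deriv (fun s' => F s' t) s⟫
          + ⟪deriv (fun t' => ν s t') t, deriv (fun t' => F s t') t⟫
            / ⟪deriv (fun t' => F s t') t, deriv (fun t' => F s t') t⟫ = 0)
      ↔ (∀ t : ℝ, (1 - r t ^ 2) * r t * deriv (deriv r) t
          = (1 - 2 * r t ^ 2) * (2 * (deriv r t) ^ 2 + r t ^ 2 * (1 - r t ^ 2))) := by
  have h2 : ContDiff ℝ ((1:ℕ∞) + 1) r := by convert hr using 2; norm_num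
  have hdr := contDiff_succ_iff_deriv.mp h2
  have hd1 : Differentiable ℝ r := hdr.1
  have hd2 : Differentiable ℝ (deriv r) := hdr.2.2.differentiable one_ne_zero
  have hEpos : ∀ t : ℝ, (0:ℝ) < deriv r t ^ 2 + r t ^ 2 * (1 - r t ^ 2) := by
    intro t
    obtain ⟨h0, h1⟩ := hr01 t
    have h2' : (0:ℝ) < 1 - r t ^ 2 := by nlinarith
    have h3 := mul_pos (pow_pos h0 2) h2'
    nlinarith [sq_nonneg (deriv r t)]
  have key : ∀ s t : ℝ,
      ⟪deriv (fun s' => ν s' t) s, deriv (fun s' => F s' t) s⟫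
          / ⟪deriv (fun s' => F s' t) s, deriv (fun s' => F s' t) s⟫
        + ⟪deriv (fun t' => ν s t') t, deriv (fun t' => F s t') t⟫
          / ⟪deriv (fun t' => F s t') t, deriv (fun t' => F s t') t⟫
      = ((Real.sqrt (deriv r t ^ 2 + r t ^ 2 * (1 - r t ^ 2)))⁻¹)^3
        * ((1 - r t ^ 2) * r t * deriv (deriv r) t
            - (1 - 2 * r t ^ 2) * (2 * deriv r t ^ 2 + r t ^ 2 * (1 - r t ^ 2))) := by
    intro s t
    obtain ⟨hρ0, hρ1⟩ := hr01 t
    have h1ρ : (0:ℝ) < 1 - r t ^ 2 := by nlinarith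
    have hqpos : 0 < Real.sqrt (1 - r t ^ 2) := Real.sqrt_pos.mpr h1ρ
    have hq : Real.sqrt (1 - r t ^ 2) ≠ 0 := ne_of_gt hqpos
    have hq2 : Real.sqrt (1 - r t ^ 2) ^ 2 = 1 - r t ^ 2 := Real.sq_sqrt h1ρ.le
    have hWpos : 0 < Real.sqrt (deriv r t ^ 2 + r t ^ 2 * (1 - r t ^ 2)) :=
      Real.sqrt_pos.mpr (hEpos t)
    have hW : Real.sqrt (deriv r t ^ 2 + r t ^ 2 * (1 - r t ^ 2)) ≠ 0 := ne_of_gt hWpos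
    have hW2 : Real.sqrt (deriv r t ^ 2 + r t ^ 2 * (1 - r t ^ 2)) ^ 2
        = deriv r t ^ 2 + r t ^ 2 * (1 - r t ^ 2) := Real.sq_sqrt (hEpos t).le
    have hr' : HasDerivAt r (deriv r t) t := (hd1 t).hasDerivAt
    have hr'' : HasDerivAt (deriv r) (deriv (deriv r) t) t := (hd2 t).hasDerivAt
    have hpow : HasDerivAt (fun y => r y ^ 2) (2 * r t * deriv r t) t := by
      convert (show HasDerivAt (fun y => r y ^ 2) _ t from hr'.fun_pow 2) using 1
      push_cast
      ring
    have hu : HasDerivAt (fun y => 1 - r y ^ 2) (-(2 * r t * deriv r t)) t := by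
      convert hpow.const_sub 1 using 1
    have hsq' : HasDerivAt (fun y => Real.sqrt (1 - r y ^ 2))
        (-(r t * deriv r t) / Real.sqrt (1 - r t ^ 2)) t := by
      have h : HasDerivAt (fun y => Real.sqrt (1 - r y ^ 2)) _ t := (Real.hasDerivAt_sqrt (ne_of_gt h1ρ)).comp t hu
      convert h using 1
      field_simp
    -- s-derivative of F
    have hFs_fun : (fun s' => F s' t) = fun s' =>
        e4 ![Real.sqrt (1 - r t ^ 2) * Real.cos s',
          Real.sqrt (1 - r t ^ 2) * Real.sin s',
          r t * Real.cos t, r t * Real.sin t] := funext fun s' => hF s' t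
    have hFsd : HasDerivAt (fun s' => F s' t)
        (e4 ![Real.sqrt (1 - r t ^ 2) * -Real.sin s,
          Real.sqrt (1 - r t ^ 2) * Real.cos s, 0, 0]) s := by
      rw [hFs_fun]
      exact hasDerivAt_e4 ((Real.hasDerivAt_cos s).const_mul _)
        ((Real.hasDerivAt_sin s).const_mul _)
        (hasDerivAt_const s _) (hasDerivAt_const s _)
    -- s-derivative of ν
    have hνs_fun : (fun s' => ν s' t) = fun s' =>
        (Real.sqrt (deriv r t ^ 2 + r t ^ 2 * (1 - r t ^ 2)))⁻¹ •
          e4 ![r t ^ 2 * Real.sqrt (1 - r t ^ 2) * Real.cos s',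
            r t ^ 2 * Real.sqrt (1 - r t ^ 2) * Real.sin s',
            -(r t * (1 - r t ^ 2) * Real.cos t) - deriv r t * Real.sin t,
            -(r t * (1 - r t ^ 2) * Real.sin t) + deriv r t * Real.cos t] := by
      funext s'
      rw [hν s' t, nu_core]
    have hνsd : HasDerivAt (fun s' => ν s' t)
        ((Real.sqrt (deriv r t ^ 2 + r t ^ 2 * (1 - r t ^ 2)))⁻¹ •
          e4 ![r t ^ 2 * Real.sqrt (1 - r t ^ 2) * -Real.sin s,
            r t ^ 2 * Real.sqrt (1 - r t ^ 2) * Real.cos s, 0, 0]) s := by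
      rw [hνs_fun]
      exact HasDerivAt.fun_const_smul _
        (hasDerivAt_e4 ((Real.hasDerivAt_cos s).const_mul _)
          ((Real.hasDerivAt_sin s).const_mul _)
          (hasDerivAt_const s _) (hasDerivAt_const s _))
    -- t-derivative of F
    have hFt_fun : (fun t' => F s t') = fun t' =>
        e4 ![Real.sqrt (1 - r t' ^ 2) * Real.cos s,
          Real.sqrt (1 - r t' ^ 2) * Real.sin s,
          r t' * Real.cos t', r t' * Real.sin t'] := funext fun t' => hF s t'
    have hFtd : HasDerivAt (fun t' => F s t')
        (e4 ![-(r t * deriv r t) / Real.sqrt (1 - r t ^ 2) * Real.cos s,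
          -(r t * deriv r t) / Real.sqrt (1 - r t ^ 2) * Real.sin s,
          deriv r t * Real.cos t + r t * -Real.sin t,
          deriv r t * Real.sin t + r t * Real.cos t]) t := by
      rw [hFt_fun]
      exact hasDerivAt_e4 (hsq'.mul_const _) (hsq'.mul_const _)
        (hr'.mul (Real.hasDerivAt_cos t)) (hr'.mul (Real.hasDerivAt_sin t))
    -- t-derivative of ν
    have hνt_fun : (fun t' => ν s t') = fun t' =>
        (Real.sqrt (deriv r t' ^ 2 + r t' ^ 2 * (1 - r t' ^ 2)))⁻¹ •
          e4 ![r t' ^ 2 * Real.sqrt (1 - r t' ^ 2) * Real.cos s,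
            r t' ^ 2 * Real.sqrt (1 - r t' ^ 2) * Real.sin s,
            -(r t' * (1 - r t' ^ 2) * Real.cos t') - deriv r t' * Real.sin t',
            -(r t' * (1 - r t' ^ 2) * Real.sin t') + deriv r t' * Real.cos t'] := by
      funext t'
      rw [hν s t', nu_core]
    have hEd : DifferentiableAt ℝ (fun t' => deriv r t' ^ 2 + r t' ^ 2 * (1 - r t' ^ 2)) t :=
      ((hd2 t).pow 2).add (((hd1 t).pow 2).mul (((hd1 t).pow 2).const_sub 1))
    have hwd : DifferentiableAt ℝ
        (fun t' => (Real.sqrt (deriv r t' ^ 2 + r t' ^ 2 * (1 - r t' ^ 2)))⁻¹) t :=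
      (hEd.sqrt (ne_of_gt (hEpos t))).inv hW
    obtain ⟨c', hc'⟩ : ∃ c', HasDerivAt
        (fun t' => (Real.sqrt (deriv r t' ^ 2 + r t' ^ 2 * (1 - r t' ^ 2)))⁻¹) c' t :=
      ⟨_, hwd.hasDerivAt⟩
    have hG0 : HasDerivAt (fun t' => r t' ^ 2 * Real.sqrt (1 - r t' ^ 2) * Real.cos s)
        ((2 * r t * deriv r t * Real.sqrt (1 - r t ^ 2)
          + r t ^ 2 * (-(r t * deriv r t) / Real.sqrt (1 - r t ^ 2))) * Real.cos s) t :=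
      (hpow.mul hsq').mul_const _
    have hG1 : HasDerivAt (fun t' => r t' ^ 2 * Real.sqrt (1 - r t' ^ 2) * Real.sin s)
        ((2 * r t * deriv r t * Real.sqrt (1 - r t ^ 2)
          + r t ^ 2 * (-(r t * deriv r t) / Real.sqrt (1 - r t ^ 2))) * Real.sin s) t :=
      (hpow.mul hsq').mul_const _
    have hG2 : HasDerivAt
        (fun t' => -(r t' * (1 - r t' ^ 2) * Real.cos t') - deriv r t' * Real.sin t')
        (-((deriv r t * (1 - r t ^ 2) + r t * -(2 * r t * deriv r t)) * Real.cos t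
            + r t * (1 - r t ^ 2) * -Real.sin t)
          - (deriv (deriv r) t * Real.sin t + deriv r t * Real.cos t)) t :=
      (((hr'.mul hu).mul (Real.hasDerivAt_cos t)).neg).sub (hr''.mul (Real.hasDerivAt_sin t))
    have hG3 : HasDerivAt
        (fun t' => -(r t' * (1 - r t' ^ 2) * Real.sin t') + deriv r t' * Real.cos t')
        (-((deriv r t * (1 - r t ^ 2) + r t * -(2 * r t * deriv r t)) * Real.sin t
            + r t * (1 - r t ^ 2) * Real.cos t)
          + (deriv (deriv r) t * Real.cos t + deriv r t * -Real.sin t)) t :=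
      (((hr'.mul hu).mul (Real.hasDerivAt_sin t)).neg).add (hr''.mul (Real.hasDerivAt_cos t))
    have hGd := hasDerivAt_e4 hG0 hG1 hG2 hG3
    have hνtd : HasDerivAt (fun t' => ν s t')
        ((Real.sqrt (deriv r t ^ 2 + r t ^ 2 * (1 - r t ^ 2)))⁻¹ •
          e4 ![(2 * r t * deriv r t * Real.sqrt (1 - r t ^ 2)
              + r t ^ 2 * (-(r t * deriv r t) / Real.sqrt (1 - r t ^ 2))) * Real.cos s,
            (2 * r t * deriv r t * Real.sqrt (1 - r t ^ 2)
              + r t ^ 2 * (-(r t * deriv r t) / Real.sqrt (1 - r t ^ 2))) * Real.sin s,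
            -((deriv r t * (1 - r t ^ 2) + r t * -(2 * r t * deriv r t)) * Real.cos t
                + r t * (1 - r t ^ 2) * -Real.sin t)
              - (deriv (deriv r) t * Real.sin t + deriv r t * Real.cos t),
            -((deriv r t * (1 - r t ^ 2) + r t * -(2 * r t * deriv r t)) * Real.sin t
                + r t * (1 - r t ^ 2) * Real.cos t)
              + (deriv (deriv r) t * Real.cos t + deriv r t * -Real.sin t)]
          + c' • e4 ![r t ^ 2 * Real.sqrt (1 - r t ^ 2) * Real.cos s,
            r t ^ 2 * Real.sqrt (1 - r t ^ 2) * Real.sin s,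
            -(r t * (1 - r t ^ 2) * Real.cos t) - deriv r t * Real.sin t,
            -(r t * (1 - r t ^ 2) * Real.sin t) + deriv r t * Real.cos t]) t := by
      rw [hνt_fun]
      exact hc'.smul hGd
    rw [hνsd.deriv, hFsd.deriv, hνtd.deriv, hFtd.deriv]
    -- inner products
    have I1 : ⟪(Real.sqrt (deriv r t ^ 2 + r t ^ 2 * (1 - r t ^ 2)))⁻¹ •
          e4 ![r t ^ 2 * Real.sqrt (1 - r t ^ 2) * -Real.sin s,
            r t ^ 2 * Real.sqrt (1 - r t ^ 2) * Real.cos s, 0, 0],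
        e4 ![Real.sqrt (1 - r t ^ 2) * -Real.sin s,
          Real.sqrt (1 - r t ^ 2) * Real.cos s, 0, 0]⟫
        = (Real.sqrt (deriv r t ^ 2 + r t ^ 2 * (1 - r t ^ 2)))⁻¹
          * (r t ^ 2 * Real.sqrt (1 - r t ^ 2) ^ 2) := by
      rw [real_inner_smul_left, inner_e4']
      linear_combination ((Real.sqrt (deriv r t ^ 2 + r t ^ 2 * (1 - r t ^ 2)))⁻¹
        * (r t ^ 2 * Real.sqrt (1 - r t ^ 2) ^ 2)) * Real.sin_sq_add_cos_sq s
    have I2 : ⟪e4 ![Real.sqrt (1 - r t ^ 2) * -Real.sin s,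
          Real.sqrt (1 - r t ^ 2) * Real.cos s, 0, 0],
        e4 ![Real.sqrt (1 - r t ^ 2) * -Real.sin s,
          Real.sqrt (1 - r t ^ 2) * Real.cos s, 0, 0]⟫
        = Real.sqrt (1 - r t ^ 2) ^ 2 := by
      rw [inner_e4']
      linear_combination (Real.sqrt (1 - r t ^ 2) ^ 2) * Real.sin_sq_add_cos_sq s
    have I3 : ⟪e4 ![-(r t * deriv r t) / Real.sqrt (1 - r t ^ 2) * Real.cos s,
          -(r t * deriv r t) / Real.sqrt (1 - r t ^ 2) * Real.sin s,
          deriv r t * Real.cos t + r t * -Real.sin t,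
          deriv r t * Real.sin t + r t * Real.cos t],
        e4 ![-(r t * deriv r t) / Real.sqrt (1 - r t ^ 2) * Real.cos s,
          -(r t * deriv r t) / Real.sqrt (1 - r t ^ 2) * Real.sin s,
          deriv r t * Real.cos t + r t * -Real.sin t,
          deriv r t * Real.sin t + r t * Real.cos t]⟫
        = (-(r t * deriv r t) / Real.sqrt (1 - r t ^ 2)) ^ 2 + deriv r t ^ 2 + r t ^ 2 := by
      rw [inner_e4']
      linear_combination ((-(r t * deriv r t) / Real.sqrt (1 - r t ^ 2)) ^ 2)
          * Real.sin_sq_add_cos_sq s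
        + (deriv r t ^ 2 + r t ^ 2) * Real.sin_sq_add_cos_sq t
    have I4 : ⟪e4 ![r t ^ 2 * Real.sqrt (1 - r t ^ 2) * Real.cos s,
          r t ^ 2 * Real.sqrt (1 - r t ^ 2) * Real.sin s,
          -(r t * (1 - r t ^ 2) * Real.cos t) - deriv r t * Real.sin t,
          -(r t * (1 - r t ^ 2) * Real.sin t) + deriv r t * Real.cos t],
        e4 ![-(r t * deriv r t) / Real.sqrt (1 - r t ^ 2) * Real.cos s,
          -(r t * deriv r t) / Real.sqrt (1 - r t ^ 2) * Real.sin s,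
          deriv r t * Real.cos t + r t * -Real.sin t,
          deriv r t * Real.sin t + r t * Real.cos t]⟫ = 0 := by
      rw [inner_e4']
      have h4 : r t ^ 2 * Real.sqrt (1 - r t ^ 2)
            * (-(r t * deriv r t) / Real.sqrt (1 - r t ^ 2))
          - r t * (1 - r t ^ 2) * deriv r t + r t * deriv r t = 0 := by
        field_simp
        ring
      linear_combination (r t ^ 2 * Real.sqrt (1 - r t ^ 2)
          * (-(r t * deriv r t) / Real.sqrt (1 - r t ^ 2))) * Real.sin_sq_add_cos_sq s
        + (-(r t * (1 - r t ^ 2) * deriv r t) + r t * deriv r t) * Real.sin_sq_add_cos_sq t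
        + h4
    have I5 : ⟪e4 ![(2 * r t * deriv r t * Real.sqrt (1 - r t ^ 2)
              + r t ^ 2 * (-(r t * deriv r t) / Real.sqrt (1 - r t ^ 2))) * Real.cos s,
            (2 * r t * deriv r t * Real.sqrt (1 - r t ^ 2)
              + r t ^ 2 * (-(r t * deriv r t) / Real.sqrt (1 - r t ^ 2))) * Real.sin s,
            -((deriv r t * (1 - r t ^ 2) + r t * -(2 * r t * deriv r t)) * Real.cos t
                + r t * (1 - r t ^ 2) * -Real.sin t)
              - (deriv (deriv r) t * Real.sin t + deriv r t * Real.cos t),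
            -((deriv r t * (1 - r t ^ 2) + r t * -(2 * r t * deriv r t)) * Real.sin t
                + r t * (1 - r t ^ 2) * Real.cos t)
              + (deriv (deriv r) t * Real.cos t + deriv r t * -Real.sin t)],
        e4 ![-(r t * deriv r t) / Real.sqrt (1 - r t ^ 2) * Real.cos s,
          -(r t * deriv r t) / Real.sqrt (1 - r t ^ 2) * Real.sin s,
          deriv r t * Real.cos t + r t * -Real.sin t,
          deriv r t * Real.sin t + r t * Real.cos t]⟫
        = (2 * r t * deriv r t * Real.sqrt (1 - r t ^ 2)
            + r t ^ 2 * (-(r t * deriv r t) / Real.sqrt (1 - r t ^ 2)))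
              * (-(r t * deriv r t) / Real.sqrt (1 - r t ^ 2))
          + (-(deriv r t * (1 - 3 * r t ^ 2)) - deriv r t) * deriv r t
          + (-(r t * (1 - r t ^ 2)) + deriv (deriv r) t) * r t := by
      rw [inner_e4']
      linear_combination ((2 * r t * deriv r t * Real.sqrt (1 - r t ^ 2)
            + r t ^ 2 * (-(r t * deriv r t) / Real.sqrt (1 - r t ^ 2)))
              * (-(r t * deriv r t) / Real.sqrt (1 - r t ^ 2))) * Real.sin_sq_add_cos_sq s
        + ((-(deriv r t * (1 - 3 * r t ^ 2)) - deriv r t) * deriv r t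
            + (-(r t * (1 - r t ^ 2)) + deriv (deriv r) t) * r t) * Real.sin_sq_add_cos_sq t
    have I6 : ⟪(Real.sqrt (deriv r t ^ 2 + r t ^ 2 * (1 - r t ^ 2)))⁻¹ •
          e4 ![(2 * r t * deriv r t * Real.sqrt (1 - r t ^ 2)
              + r t ^ 2 * (-(r t * deriv r t) / Real.sqrt (1 - r t ^ 2))) * Real.cos s,
            (2 * r t * deriv r t * Real.sqrt (1 - r t ^ 2)
              + r t ^ 2 * (-(r t * deriv r t) / Real.sqrt (1 - r t ^ 2))) * Real.sin s,
            -((deriv r t * (1 - r t ^ 2) + r t * -(2 * r t * deriv r t)) * Real.cos t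
                + r t * (1 - r t ^ 2) * -Real.sin t)
              - (deriv (deriv r) t * Real.sin t + deriv r t * Real.cos t),
            -((deriv r t * (1 - r t ^ 2) + r t * -(2 * r t * deriv r t)) * Real.sin t
                + r t * (1 - r t ^ 2) * Real.cos t)
              + (deriv (deriv r) t * Real.cos t + deriv r t * -Real.sin t)]
          + c' • e4 ![r t ^ 2 * Real.sqrt (1 - r t ^ 2) * Real.cos s,
            r t ^ 2 * Real.sqrt (1 - r t ^ 2) * Real.sin s,
            -(r t * (1 - r t ^ 2) * Real.cos t) - deriv r t * Real.sin t,
            -(r t * (1 - r t ^ 2) * Real.sin t) + deriv r t * Real.cos t],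
        e4 ![-(r t * deriv r t) / Real.sqrt (1 - r t ^ 2) * Real.cos s,
          -(r t * deriv r t) / Real.sqrt (1 - r t ^ 2) * Real.sin s,
          deriv r t * Real.cos t + r t * -Real.sin t,
          deriv r t * Real.sin t + r t * Real.cos t]⟫
        = (Real.sqrt (deriv r t ^ 2 + r t ^ 2 * (1 - r t ^ 2)))⁻¹
          * ((2 * r t * deriv r t * Real.sqrt (1 - r t ^ 2)
              + r t ^ 2 * (-(r t * deriv r t) / Real.sqrt (1 - r t ^ 2)))
                * (-(r t * deriv r t) / Real.sqrt (1 - r t ^ 2))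
            + (-(deriv r t * (1 - 3 * r t ^ 2)) - deriv r t) * deriv r t
            + (-(r t * (1 - r t ^ 2)) + deriv (deriv r) t) * r t) := by
      rw [inner_add_left, real_inner_smul_left, real_inner_smul_left, I5, I4, mul_zero,
        add_zero]
    rw [I1, I2, I6, I3]
    exact key_alg (r t) (deriv r t) (deriv (deriv r) t)
      (Real.sqrt (1 - r t ^ 2)) (Real.sqrt (deriv r t ^ 2 + r t ^ 2 * (1 - r t ^ 2)))
      hq hW hq2 hW2
  constructor
  · intro h t
    have h0 := (key 0 t).symm.trans (h 0 t)
    have hw3 : ((Real.sqrt (deriv r t ^ 2 + r t ^ 2 * (1 - r t ^ 2)))⁻¹) ^ 3 ≠ 0 :=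
      pow_ne_zero _ (inv_ne_zero (ne_of_gt (Real.sqrt_pos.mpr (hEpos t))))
    have hD := (mul_eq_zero.mp h0).resolve_left hw3
    linarith [hD]
  · intro h s t
    rw [key s t, h t, sub_self, mul_zero]
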